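/- Uniform L¹-convergence of solutions as the noise vanishes (Proposition 5.1): Let K ⊆ ℝ₊ⁿ be compact and suppose there is a constant C₀ such that for all y ∈ K and all t ≥ 0, ‖Ψ(t,y)‖ ≤ C₀ and ‖F(Ψ(t,y))‖ ≤ C₀, where F is the Lotka–Volterra vector field Fᵢ(y) = yᵢ·(r + Σⱼ a i j·yⱼ). Fix T > 0. Then there exists a constant C (depending on K and T) such that for every σ with 0 < σ² ≤ r/2, sup_{y ∈ K} 𝔼[‖Φ^σ(T,·,y) − Ψ(T,y)‖] ≤ C·|σ|. In particular, for every δ > 0, sup_{y ∈ K} ℙ({ω : ‖Φ^σ(T,ω,y) − Ψ(T,y)‖ ≥ δ}) → 0 as σ → 0. -/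

import Mathlib

open scoped ENNReal NNReal
open Real Filter Topology MeasureTheory ProbabilityTheory intervalIntegral

set_option linter.unusedSectionVars false
set_option linter.unusedVariables false

lemma LV_integral_exp_mul (r : ℝ) (hr : r ≠ 0) (s : ℝ) :
    ∫ u in (0:ℝ)..s, Real.exp (r * u) = (Real.exp (r * s) - 1) / r := by
  have h : ∀ x ∈ Set.uIcc (0:ℝ) s,
      HasDerivAt (fun u => Real.exp (r * u) / r) (Real.exp (r * x)) x := by
    intro x _
    have h1 : HasDerivAt (fun u : ℝ => Real.exp (r * u)) (Real.exp (r * x) * r) x := by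
      simpa using (((hasDerivAt_id x).const_mul r).exp)
    simpa [mul_div_assoc, mul_div_cancel_right₀ _ hr] using h1.div_const r
  have hint : IntervalIntegrable (fun u => Real.exp (r * u)) volume 0 s :=
    (Real.continuous_exp.comp (continuous_const.mul continuous_id)).intervalIntegrable 0 s
  have := intervalIntegral.integral_eq_sub_of_hasDerivAt h hint
  simpa [sub_div] using this

lemma LV_exp_sub_one_le (a : ℝ) (ha : 0 ≤ a) : Real.exp a - 1 ≤ a * Real.exp a := by
  have h1 : (1 - a) * Real.exp a ≤ Real.exp (-a) * Real.exp a := by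
    apply mul_le_mul_of_nonneg_right _ (Real.exp_pos a).le
    linarith [Real.add_one_le_exp (-a)]
  rw [← Real.exp_add, neg_add_cancel, Real.exp_zero] at h1
  nlinarith

lemma LV_lintegral_exp_gaussian (c : ℝ) (v : ℝ≥0) :
    ∫⁻ x, ENNReal.ofReal (Real.exp (c * x)) ∂(gaussianReal 0 v)
      = ENNReal.ofReal (Real.exp (c ^ 2 * v / 2)) := by
  by_cases hv : v = 0
  · subst hv
    rw [gaussianReal_zero_var, lintegral_dirac]
    simp
  · have hvpos : (0:ℝ) < (v:ℝ) := by positivity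
    have key : ∀ x : ℝ, gaussianPDFReal 0 v x * Real.exp (c * x)
        = Real.exp (c ^ 2 * v / 2) * gaussianPDFReal (c * v) v x := by
      intro x
      simp only [gaussianPDFReal]
      have hexp : -(x - 0) ^ 2 / (2 * (v:ℝ)) + c * x
          = c ^ 2 * (v:ℝ) / 2 + -(x - c * (v:ℝ)) ^ 2 / (2 * (v:ℝ)) := by
        field_simp
        ring
      rw [mul_assoc, ← Real.exp_add, hexp, Real.exp_add]
      ring
    have hgm : Measurable fun x : ℝ => ENNReal.ofReal (Real.exp (c * x)) := by fun_prop
    rw [gaussianReal_of_var_ne_zero _ hv,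
      lintegral_withDensity_eq_lintegral_mul _ (measurable_gaussianPDF 0 v) hgm]
    have : ∀ x : ℝ, (gaussianPDF 0 v * fun x => ENNReal.ofReal (Real.exp (c * x))) x
        = ENNReal.ofReal (Real.exp (c ^ 2 * v / 2))
            * ENNReal.ofReal (gaussianPDFReal (c * v) v x) := by
      intro x
      simp only [Pi.mul_apply, gaussianPDF]
      rw [← ENNReal.ofReal_mul (gaussianPDFReal_nonneg _ _ _), key x,
        ENNReal.ofReal_mul (Real.exp_pos _).le]
    rw [lintegral_congr this,
      lintegral_const_mul _ (measurable_gaussianPDFReal _ _).ennreal_ofReal,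
      lintegral_gaussianPDFReal_eq_one _ hv, mul_one]

lemma LV_det (r T σ : ℝ) (hr : 0 < r) (hT : 0 < T) (b : ℝ → ℝ) (hb : Continuous b)
    (gg : ℝ → ℝ)
    (hgg : ∀ s : ℝ, gg s = Real.exp (r * s + σ * b s) /
      (1 + r * ∫ u in (0:ℝ)..s, Real.exp (r * u + σ * b u))) :
    |gg T - 1| ≤ Real.exp (r * T) * |Real.exp (σ * b T) - 1|
        + r * ∫ u in (0:ℝ)..T, Real.exp (r * u) * |Real.exp (σ * b u) - 1| ∧
    0 ≤ ∫ u in (0:ℝ)..T, gg u ∧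
    |(∫ u in (0:ℝ)..T, gg u) - T|
      ≤ (1 + r * T) * ∫ u in (0:ℝ)..T, Real.exp (r * u) * |Real.exp (σ * b u) - 1| := by
  set W : ℝ := ∫ u in (0:ℝ)..T, Real.exp (r * u) * |Real.exp (σ * b u) - 1| with hWdef
  set h : ℝ → ℝ := fun u => Real.exp (r * u + σ * b u) with hhdef
  have hcont_h : Continuous h :=
    Real.continuous_exp.comp ((continuous_const.mul continuous_id).add (continuous_const.mul hb))
  have hpos : ∀ u, 0 < h u := fun u => Real.exp_pos _
  set D : ℝ → ℝ := fun s => 1 + r * ∫ u in (0:ℝ)..s, h u with hDdef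
  have hInth : ∀ s : ℝ, IntervalIntegrable h volume 0 s := fun s => hcont_h.intervalIntegrable 0 s
  have hD1 : ∀ s : ℝ, 0 ≤ s → 1 ≤ D s := by
    intro s hs
    have h0 : 0 ≤ ∫ u in (0:ℝ)..s, h u :=
      intervalIntegral.integral_nonneg hs (fun u _ => (hpos u).le)
    have : 0 ≤ r * ∫ u in (0:ℝ)..s, h u := mul_nonneg hr.le h0
    simp only [hDdef]
    linarith
  have hDpos : ∀ s : ℝ, 0 ≤ s → 0 < D s := fun s hs => lt_of_lt_of_le one_pos (hD1 s hs)
  have hsplit : ∀ u : ℝ, h u = Real.exp (r * u) * Real.exp (σ * b u) := by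
    intro u; rw [hhdef]; exact Real.exp_add _ _
  have hcont_e : Continuous fun u : ℝ => Real.exp (r * u) :=
    Real.continuous_exp.comp (continuous_const.mul continuous_id)
  have hcont_abs : Continuous fun u : ℝ => Real.exp (r * u) * |Real.exp (σ * b u) - 1| :=
    hcont_e.mul (((Real.continuous_exp.comp (continuous_const.mul hb)).sub continuous_const).abs)
  have hgg' : ∀ s : ℝ, gg s = h s / D s := fun s => hgg s
  -- key algebraic identity
  have hkey : ∀ s : ℝ, h s - D s
      = Real.exp (r * s) * (Real.exp (σ * b s) - 1)
        - r * ∫ u in (0:ℝ)..s, Real.exp (r * u) * (Real.exp (σ * b u) - 1) := by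
    intro s
    have h1 : ∀ u : ℝ, Real.exp (r * u) * (Real.exp (σ * b u) - 1) = h u - Real.exp (r * u) := by
      intro u; rw [hsplit]; ring
    have h2 : (∫ u in (0:ℝ)..s, Real.exp (r * u) * (Real.exp (σ * b u) - 1))
        = (∫ u in (0:ℝ)..s, h u) - (Real.exp (r * s) - 1) / r := by
      simp_rw [h1]
      rw [intervalIntegral.integral_sub (hInth s) (hcont_e.intervalIntegrable 0 s),
        LV_integral_exp_mul r hr.ne' s]
    rw [h2, hsplit s]
    simp only [hDdef]
    field_simp
    ring
  -- bound on |gg s - 1|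
  have hbound : ∀ s : ℝ, 0 ≤ s → |gg s - 1| ≤ Real.exp (r * s) * |Real.exp (σ * b s) - 1|
      + r * ∫ u in (0:ℝ)..s, Real.exp (r * u) * |Real.exp (σ * b u) - 1| := by
    intro s hs
    have hDne : D s ≠ 0 := (hDpos s hs).ne'
    have e1 : gg s - 1 = (h s - D s) / D s := by rw [hgg' s, div_sub_one hDne]
    have e2 : |gg s - 1| ≤ |h s - D s| := by
      rw [e1, abs_div, abs_of_pos (hDpos s hs)]
      exact div_le_self (abs_nonneg _) (hD1 s hs)
    have e3 : |∫ u in (0:ℝ)..s, Real.exp (r * u) * (Real.exp (σ * b u) - 1)|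
        ≤ ∫ u in (0:ℝ)..s, Real.exp (r * u) * |Real.exp (σ * b u) - 1| := by
      have := intervalIntegral.abs_integral_le_integral_abs (μ := volume)
        (f := fun u => Real.exp (r * u) * (Real.exp (σ * b u) - 1)) hs
      refine this.trans_eq ?_
      apply intervalIntegral.integral_congr
      intro u _
      simp [abs_mul, Real.abs_exp]
    calc |gg s - 1| ≤ |h s - D s| := e2
      _ ≤ Real.exp (r * s) * |Real.exp (σ * b s) - 1|
          + r * |∫ u in (0:ℝ)..s, Real.exp (r * u) * (Real.exp (σ * b u) - 1)| := by
          rw [hkey s]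
          refine (abs_sub _ _).trans ?_
          gcongr
          · simp [abs_mul, Real.abs_exp]
          · rw [abs_mul, abs_of_pos hr]
      _ ≤ _ := by
          have := mul_le_mul_of_nonneg_left e3 hr.le
          linarith
  have hWnn : 0 ≤ W :=
    intervalIntegral.integral_nonneg hT.le
      (fun u _ => mul_nonneg (Real.exp_pos _).le (abs_nonneg _))
  have hmono : ∀ s ∈ Set.Icc (0:ℝ) T,
      (∫ u in (0:ℝ)..s, Real.exp (r * u) * |Real.exp (σ * b u) - 1|) ≤ W := by
    intro s hsm
    exact intervalIntegral.integral_mono_interval le_rfl hsm.1 hsm.2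
      (Filter.Eventually.of_forall fun u => mul_nonneg (Real.exp_pos _).le (abs_nonneg _))
      (hcont_abs.intervalIntegrable 0 T)
  -- continuity of gg on [0, T]
  have hDcont : Continuous D :=
    continuous_const.add (continuous_const.mul
      (intervalIntegral.continuous_primitive (fun a b => hcont_h.intervalIntegrable a b) 0))
  have hggcont : ContinuousOn gg (Set.Icc 0 T) := by
    have : ContinuousOn (fun s => h s / D s) (Set.Icc 0 T) :=
      (hcont_h.continuousOn).div hDcont.continuousOn
        (fun s hsm => (hDpos s hsm.1).ne')
    exact this.congr (fun s _ => hgg' s)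
  have hggInt : IntervalIntegrable gg volume 0 T := by
    apply ContinuousOn.intervalIntegrable
    rwa [Set.uIcc_of_le hT.le]
  have hτnn : 0 ≤ ∫ u in (0:ℝ)..T, gg u := by
    apply intervalIntegral.integral_nonneg hT.le
    intro u hu
    rw [hgg' u]
    exact div_nonneg (hpos u).le (hDpos u hu.1).le
  refine ⟨by simpa using hbound T hT.le, hτnn, ?_⟩
  have hsub : (∫ u in (0:ℝ)..T, gg u) - T = ∫ u in (0:ℝ)..T, (gg u - 1) := by
    rw [intervalIntegral.integral_sub hggInt (intervalIntegrable_const), integral_one, sub_zero]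
  have habs : |(∫ u in (0:ℝ)..T, gg u) - T| ≤ ∫ u in (0:ℝ)..T, |gg u - 1| := by
    rw [hsub]
    exact intervalIntegral.abs_integral_le_integral_abs (μ := volume) hT.le
  have hmono2 : (∫ u in (0:ℝ)..T, |gg u - 1|)
      ≤ ∫ u in (0:ℝ)..T, (Real.exp (r * u) * |Real.exp (σ * b u) - 1| + r * W) := by
    apply intervalIntegral.integral_mono_on hT.le
    · apply ContinuousOn.intervalIntegrable
      rw [Set.uIcc_of_le hT.le]
      exact (hggcont.sub continuousOn_const).abs
    · exact (hcont_abs.intervalIntegrable 0 T).add (intervalIntegrable_const)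
    · intro s hsm
      calc |gg s - 1| ≤ Real.exp (r * s) * |Real.exp (σ * b s) - 1|
            + r * ∫ u in (0:ℝ)..s, Real.exp (r * u) * |Real.exp (σ * b u) - 1| :=
          hbound s hsm.1
        _ ≤ _ := by
            have := mul_le_mul_of_nonneg_left (hmono s hsm) hr.le
            linarith
  have hsum : (∫ u in (0:ℝ)..T, (Real.exp (r * u) * |Real.exp (σ * b u) - 1| + r * W))
      = W + r * W * T := by
    rw [intervalIntegral.integral_add (hcont_abs.intervalIntegrable 0 T)
      (intervalIntegrable_const), intervalIntegral.integral_const]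
    simp [hWdef]
    ring
  calc |(∫ u in (0:ℝ)..T, gg u) - T| ≤ _ := habs
    _ ≤ W + r * W * T := by rw [← hsum]; exact hmono2
    _ = (1 + r * T) * W := by ring

section Aux
variable {Ω : Type*} [MeasureSpace Ω] [IsProbabilityMeasure (ℙ : Measure Ω)]

lemma LV_lintegral_exp_comp (X : Ω → ℝ) (hX : Measurable X) (v : ℝ≥0)
    (hmap : Measure.map X ℙ = gaussianReal 0 v) (c : ℝ) :
    ∫⁻ ω, ENNReal.ofReal (Real.exp (c * X ω)) ∂(ℙ : Measure Ω)
      = ENNReal.ofReal (Real.exp (c ^ 2 * v / 2)) := by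
  have hgm : Measurable fun x : ℝ => ENNReal.ofReal (Real.exp (c * x)) := by fun_prop
  rw [← LV_lintegral_exp_gaussian c v, ← hmap, lintegral_map hgm hX]

lemma LV_integrable_exp_comp (X : Ω → ℝ) (hX : Measurable X) (v : ℝ≥0)
    (hmap : Measure.map X ℙ = gaussianReal 0 v) (c : ℝ) :
    Integrable (fun ω => Real.exp (c * X ω)) (ℙ : Measure Ω) := by
  refine ⟨(hX.const_mul c).exp.aestronglyMeasurable, ?_⟩
  rw [hasFiniteIntegral_iff_ofReal (ae_of_all _ fun ω => (Real.exp_pos _).le)]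
  rw [LV_lintegral_exp_comp X hX v hmap c]
  exact ENNReal.ofReal_lt_top

lemma LV_integral_exp_comp (X : Ω → ℝ) (hX : Measurable X) (v : ℝ≥0)
    (hmap : Measure.map X ℙ = gaussianReal 0 v) (c : ℝ) :
    ∫ ω, Real.exp (c * X ω) ∂(ℙ : Measure Ω) = Real.exp (c ^ 2 * v / 2) := by
  rw [integral_eq_lintegral_of_nonneg_ae (ae_of_all _ fun ω => (Real.exp_pos _).le)
    (hX.const_mul c).exp.aestronglyMeasurable, LV_lintegral_exp_comp X hX v hmap c,
    ENNReal.toReal_ofReal (Real.exp_pos _).le]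

lemma LV_abs_exp_sub_one (X : Ω → ℝ) (hX : Measurable X) (v : ℝ≥0)
    (hmap : Measure.map X ℙ = gaussianReal 0 v) (σ : ℝ) (hσ : σ ≠ 0) :
    Integrable (fun ω => |Real.exp (σ * X ω) - 1|) (ℙ : Measure Ω) ∧
    ∫ ω, |Real.exp (σ * X ω) - 1| ∂(ℙ : Measure Ω)
      ≤ |σ| * ((v : ℝ) * Real.exp (2 * σ ^ 2 * v) + 1 / 2) := by
  have hint1 := LV_integrable_exp_comp X hX v hmap σ
  have hint2 := LV_integrable_exp_comp X hX v hmap (2 * σ)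
  have hZint : Integrable (fun ω => Real.exp (σ * X ω) - 1) (ℙ : Measure Ω) :=
    hint1.sub (integrable_const 1)
  have hexpand : (fun ω => (Real.exp (σ * X ω) - 1) ^ 2)
      = fun ω => Real.exp (2 * σ * X ω) - 2 * Real.exp (σ * X ω) + 1 := by
    funext ω
    rw [show 2 * σ * X ω = σ * X ω + σ * X ω by ring, Real.exp_add]
    ring
  have hsq : Integrable (fun ω => (Real.exp (σ * X ω) - 1) ^ 2) (ℙ : Measure Ω) := by
    rw [hexpand]
    exact (hint2.sub (hint1.const_mul 2)).add (integrable_const 1)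
  have hEsq : ∫ ω, (Real.exp (σ * X ω) - 1) ^ 2 ∂(ℙ : Measure Ω)
      ≤ 2 * σ ^ 2 * v * Real.exp (2 * σ ^ 2 * v) := by
    have hsub : Integrable (fun ω => Real.exp (2 * σ * X ω) - 2 * Real.exp (σ * X ω))
        (ℙ : Measure Ω) := hint2.sub (hint1.const_mul 2)
    have heq : ∫ ω, (Real.exp (σ * X ω) - 1) ^ 2 ∂(ℙ : Measure Ω)
        = Real.exp (2 * σ ^ 2 * v) - 2 * Real.exp (σ ^ 2 * v / 2) + 1 := by
      simp_rw [hexpand]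
      rw [integral_add hsub (integrable_const 1),
        integral_sub hint2 (hint1.const_mul 2), MeasureTheory.integral_const_mul 2,
        LV_integral_exp_comp X hX v hmap (2 * σ), LV_integral_exp_comp X hX v hmap σ,
        MeasureTheory.integral_const]
      have h2 : (2 * σ) ^ 2 * (v : ℝ) / 2 = 2 * σ ^ 2 * v := by ring
      simp [h2]
    rw [heq]
    have h1 : 1 ≤ Real.exp (σ ^ 2 * (v : ℝ) / 2) := Real.one_le_exp (by positivity)
    have h2 := LV_exp_sub_one_le (2 * σ ^ 2 * (v : ℝ)) (by positivity)
    linarith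
  have hσ' : (0:ℝ) < |σ| := abs_pos.mpr hσ
  have hpt : ∀ ω, |Real.exp (σ * X ω) - 1|
      ≤ (Real.exp (σ * X ω) - 1) ^ 2 / (2 * |σ|) + |σ| / 2 := by
    intro ω
    set z := Real.exp (σ * X ω) - 1 with hz
    have key : 2 * |σ| * |z| ≤ z ^ 2 + σ ^ 2 := by
      nlinarith [sq_nonneg (|z| - |σ|), sq_abs z, sq_abs σ]
    calc |z| = (2 * |σ| * |z|) / (2 * |σ|) := by field_simp
      _ ≤ (z ^ 2 + σ ^ 2) / (2 * |σ|) := by gcongr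
      _ = z ^ 2 / (2 * |σ|) + |σ| / 2 := by
          rw [add_div]
          congr 1
          rw [← sq_abs σ, pow_two, mul_comm (2:ℝ) |σ|]
          exact mul_div_mul_left _ _ (ne_of_gt hσ')
  refine ⟨hZint.abs, ?_⟩
  have hRHSint : Integrable
      (fun ω => (Real.exp (σ * X ω) - 1) ^ 2 / (2 * |σ|) + |σ| / 2) (ℙ : Measure Ω) :=
    (hsq.div_const _).add (integrable_const _)
  calc ∫ ω, |Real.exp (σ * X ω) - 1| ∂(ℙ : Measure Ω)
      ≤ ∫ ω, ((Real.exp (σ * X ω) - 1) ^ 2 / (2 * |σ|) + |σ| / 2) ∂(ℙ : Measure Ω) :=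
        integral_mono hZint.abs hRHSint hpt
    _ = (∫ ω, (Real.exp (σ * X ω) - 1) ^ 2 ∂(ℙ : Measure Ω)) / (2 * |σ|) + |σ| / 2 := by
        rw [integral_add (hsq.div_const _) (integrable_const _), MeasureTheory.integral_div,
          MeasureTheory.integral_const]
        simp
    _ ≤ (2 * σ ^ 2 * v * Real.exp (2 * σ ^ 2 * v)) / (2 * |σ|) + |σ| / 2 := by
        gcongr
    _ = |σ| * ((v : ℝ) * Real.exp (2 * σ ^ 2 * v) + 1 / 2) := by
        have h3 : (2 * σ ^ 2 * (v:ℝ) * Real.exp (2 * σ ^ 2 * v)) / (2 * |σ|)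
            = |σ| * ((v:ℝ) * Real.exp (2 * σ ^ 2 * v)) := by
          rw [show 2 * σ ^ 2 * (v:ℝ) * Real.exp (2 * σ ^ 2 * v)
              = (2 * |σ|) * (|σ| * ((v:ℝ) * Real.exp (2 * σ ^ 2 * v))) by
            rw [← sq_abs σ]; ring]
          exact mul_div_cancel_left₀ _ (by positivity)
        rw [h3]
        ring

end Aux

set_option maxHeartbeats 1000000 in
/-- **Uniform L¹-convergence of the stochastic solutions as the noise vanishes**
(Proposition 5.1). Over a compact set `K` of initial data with uniformly bounded
forward orbits, `sup_{y ∈ K} 𝔼‖Φ^σ(T,·,y) - Ψ(T,y)‖ ≤ C |σ|` for all small noise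
intensities `σ` (`0 < σ² ≤ r/2`), and consequently the probability of a deviation of
size `δ` tends to `0` uniformly on `K` as `σ → 0`. -/
theorem uniform_L1_convergence_small_noise
    {Ω : Type*} [MeasureSpace Ω] [IsProbabilityMeasure (ℙ : Measure Ω)]
    (n : ℕ) (r : ℝ) (hr : 0 < r)
    (a : Fin n → Fin n → ℝ)
    (Ψ : ℝ → (Fin n → ℝ) → Fin n → ℝ)
    (hΨcont : ContinuousOn (fun p : ℝ × (Fin n → ℝ) => Ψ p.1 p.2)
      (Set.Ici 0 ×ˢ {y | ∀ i, 0 ≤ y i}))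
    (hΨ0 : ∀ y : Fin n → ℝ, (∀ i, 0 ≤ y i) → Ψ 0 y = y)
    (hΨnn : ∀ t : ℝ, 0 ≤ t → ∀ y : Fin n → ℝ, (∀ i, 0 ≤ y i) → ∀ i, 0 ≤ Ψ t y i)
    (hΨ' : ∀ y : Fin n → ℝ, (∀ i, 0 ≤ y i) → ∀ t : ℝ, 0 ≤ t → ∀ i,
      HasDerivAt (fun t => Ψ t y i) (Ψ t y i * (r + ∑ j, a i j * Ψ t y j)) t)
    (B : ℝ → Ω → ℝ)
    (hBmeas : ∀ t, Measurable (B t))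
    (hB0 : ∀ᵐ ω ∂(ℙ : Measure Ω), B 0 ω = 0)
    (hBcont : ∀ᵐ ω ∂(ℙ : Measure Ω), Continuous fun t => B t ω)
    (hBindep : ∀ (m : ℕ) (t : Fin (m + 1) → ℝ), (∀ i, 0 ≤ t i) → Monotone t →
      iIndepFun
        (fun (i : Fin m) ω => B (t i.succ) ω - B (t i.castSucc) ω) ℙ)
    (hBgauss : ∀ s t : ℝ, 0 ≤ s → s ≤ t →
      Measure.map (fun ω => B t ω - B s ω) ℙ = gaussianReal 0 (Real.toNNReal (t - s)))
    -- the σ-parametrized logistic and Lotka–Volterra solutions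
    (g : ℝ → ℝ → Ω → ℝ)
    (hg : ∀ (σ t : ℝ) (ω : Ω), g σ t ω =
      Real.exp (r * t + σ * B t ω) /
        (1 + r * ∫ s in (0:ℝ)..t, Real.exp (r * s + σ * B s ω)))
    (Φ : ℝ → ℝ → Ω → (Fin n → ℝ) → Fin n → ℝ)
    (hΦ : ∀ (σ t : ℝ) (ω : Ω) (y : Fin n → ℝ),
      Φ σ t ω y = g σ t ω • Ψ (∫ s in (0:ℝ)..t, g σ s ω) y)
    -- a compact set of initial conditions with uniformly bounded forward orbits
    (K : Set (Fin n → ℝ)) (hK : IsCompact K) (hKnn : ∀ y ∈ K, ∀ i, 0 ≤ y i)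
    (C₀ : ℝ)
    (hC₀ : ∀ y ∈ K, ∀ t : ℝ, 0 ≤ t → ‖Ψ t y‖ ≤ C₀ ∧
      ‖fun i => Ψ t y i * (r + ∑ j, a i j * Ψ t y j)‖ ≤ C₀)
    (T : ℝ) (hT : 0 < T) :
    (∃ C : ℝ, ∀ σ : ℝ, 0 < σ ^ 2 → σ ^ 2 ≤ r / 2 → ∀ y ∈ K,
      ∫ ω, ‖Φ σ T ω y - Ψ T y‖ ∂(ℙ : Measure Ω) ≤ C * |σ|) ∧
    ∀ δ : ℝ, 0 < δ →
      Tendsto (fun σ : ℝ => ⨆ y ∈ K, (ℙ : Measure Ω) {ω | δ ≤ ‖Φ σ T ω y - Ψ T y‖})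
        (𝓝[≠] 0) (𝓝 0) := by
  classical
  -- a measurable full-measure set of good sample points
  have hae : ∀ᵐ ω ∂(ℙ : Measure Ω), Continuous (fun t => B t ω) ∧ B 0 ω = 0 := hBcont.and hB0
  set S : Set Ω :=
    (MeasureTheory.toMeasurable ℙ {ω | ¬(Continuous (fun t => B t ω) ∧ B 0 ω = 0)})ᶜ with hSdef
  have hSmeas : MeasurableSet S := (measurableSet_toMeasurable _ _).compl
  have hScompl : (ℙ : Measure Ω) Sᶜ = 0 := by
    rw [hSdef, compl_compl, measure_toMeasurable]
    exact ae_iff.mp hae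
  have hSae : ∀ᵐ ω ∂(ℙ : Measure Ω), ω ∈ S := by
    rw [ae_iff]
    exact hScompl
  have hS : ∀ ω ∈ S, Continuous (fun t => B t ω) ∧ B 0 ω = 0 := by
    intro ω hω
    by_contra hcon
    exact hω (subset_toMeasurable _ _ hcon)
  -- a modification of B with everywhere-continuous paths
  set B' : ℝ → Ω → ℝ := fun t ω => if ω ∈ S then B t ω else 0 with hB'def
  have hB'meas : ∀ t, Measurable (B' t) :=
    fun t => Measurable.ite hSmeas (hBmeas t) measurable_const
  have hB'cont : ∀ ω, Continuous fun t => B' t ω := by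
    intro ω
    by_cases hω : ω ∈ S
    · simpa [hB'def, hω] using (hS ω hω).1
    · simp only [hB'def, hω, if_false]
      exact continuous_const
  have hB'S : ∀ (ω) (_ : ω ∈ S) (t : ℝ), B' t ω = B t ω := fun ω hω t => if_pos hω
  have hB'joint : StronglyMeasurable (Function.uncurry B') :=
    stronglyMeasurable_uncurry_of_continuous_of_stronglyMeasurable hB'cont
      (fun t => (hB'meas t).stronglyMeasurable)
  have hmapB' : ∀ s : ℝ, 0 ≤ s →
      Measure.map (B' s) (ℙ : Measure Ω) = gaussianReal 0 (Real.toNNReal s) := by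
    intro s hs
    have h1 : B' s =ᵐ[(ℙ : Measure Ω)] fun ω => B s ω - B 0 ω := by
      filter_upwards [hSae] with ω hω
      rw [hB'S ω hω s, (hS ω hω).2, sub_zero]
    rw [Measure.map_congr h1, hBgauss 0 s le_rfl hs, sub_zero]
  -- constants
  set C₁ : ℝ := T * Real.exp (r * T) + 1 / 2 with hC₁def
  set Cm : ℝ := C₀ * Real.exp (r * T) * C₁
      + C₀ * (r + 1 + r * T) * (Real.exp (r * T) * (C₁ * T)) with hCmdef
  -- uniform moment bound
  have hmom : ∀ σ : ℝ, σ ≠ 0 → σ ^ 2 ≤ r / 2 → ∀ u : ℝ, 0 ≤ u → u ≤ T →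
      Integrable (fun ω => |Real.exp (σ * B' u ω) - 1|) (ℙ : Measure Ω) ∧
      ∫ ω, |Real.exp (σ * B' u ω) - 1| ∂(ℙ : Measure Ω) ≤ |σ| * C₁ := by
    intro σ hσ hσr u hu huT
    obtain ⟨hint, hbd⟩ :=
      LV_abs_exp_sub_one (B' u) (hB'meas u) (Real.toNNReal u) (hmapB' u hu) σ hσ
    refine ⟨hint, hbd.trans ?_⟩
    rw [Real.coe_toNNReal u hu]
    have h2 : 2 * σ ^ 2 * u ≤ r * T := by nlinarith
    have h3 : u * Real.exp (2 * σ ^ 2 * u) ≤ T * Real.exp (r * T) :=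
      mul_le_mul huT (Real.exp_le_exp.mpr h2) (Real.exp_pos _).le (le_trans hu huT)
    have h4 : u * Real.exp (2 * σ ^ 2 * u) + 1 / 2 ≤ C₁ := by
      rw [hC₁def]; linarith
    exact mul_le_mul_of_nonneg_left h4 (abs_nonneg σ)
  -- the integrated exponential error
  have hWfacts : ∀ σ : ℝ, σ ≠ 0 → σ ^ 2 ≤ r / 2 →
      Integrable (fun ω => ∫ u in (0:ℝ)..T,
        Real.exp (r * u) * |Real.exp (σ * B' u ω) - 1|) (ℙ : Measure Ω) ∧
      ∫ ω, (∫ u in (0:ℝ)..T, Real.exp (r * u) * |Real.exp (σ * B' u ω) - 1|) ∂(ℙ : Measure Ω)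
        ≤ Real.exp (r * T) * (|σ| * C₁) * T := by
    intro σ hσ hσr
    set F : Ω × ℝ → ℝ := fun p => Real.exp (r * p.2) * |Real.exp (σ * B' p.2 p.1) - 1|
      with hFdef
    have hFm : StronglyMeasurable F := by
      apply Measurable.stronglyMeasurable
      have hBm : Measurable fun p : Ω × ℝ => B' p.2 p.1 :=
        hB'joint.measurable.comp measurable_swap
      exact ((measurable_snd.const_mul r).exp).mul
        (((hBm.const_mul σ).exp.sub measurable_const).abs)
    have hFnn : ∀ p, 0 ≤ F p := fun p => mul_nonneg (Real.exp_pos _).le (abs_nonneg _)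
    have hFcont : ∀ ω, Continuous fun u => F (ω, u) := by
      intro ω
      exact (Real.continuous_exp.comp (continuous_const.mul continuous_id)).mul
        (((Real.continuous_exp.comp (continuous_const.mul (hB'cont ω))).sub
          continuous_const).abs)
    have hWioc : ∀ ω, (∫ u in (0:ℝ)..T, Real.exp (r * u) * |Real.exp (σ * B' u ω) - 1|)
        = ∫ u in Set.Ioc (0:ℝ) T, F (ω, u) := fun ω => intervalIntegral.integral_of_le hT.le
    have hFIntOn : ∀ ω, IntegrableOn (fun u => F (ω, u)) (Set.Ioc 0 T) volume :=
      fun ω => (hFcont ω).integrableOn_Ioc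
    have hofReal : ∀ ω, ENNReal.ofReal
        (∫ u in (0:ℝ)..T, Real.exp (r * u) * |Real.exp (σ * B' u ω) - 1|)
        = ∫⁻ u in Set.Ioc (0:ℝ) T, ENNReal.ofReal (F (ω, u)) := by
      intro ω
      rw [hWioc ω]
      exact ofReal_integral_eq_lintegral_ofReal (hFIntOn ω) (ae_of_all _ fun u => hFnn _)
    have hWm : StronglyMeasurable fun ω => ∫ u in Set.Ioc (0:ℝ) T, F (ω, u) :=
      hFm.integral_prod_right'
    have hWm' : AEStronglyMeasurable
        (fun ω => ∫ u in (0:ℝ)..T, Real.exp (r * u) * |Real.exp (σ * B' u ω) - 1|)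
        (ℙ : Measure Ω) := by
      have : (fun ω => ∫ u in (0:ℝ)..T, Real.exp (r * u) * |Real.exp (σ * B' u ω) - 1|)
          = fun ω => ∫ u in Set.Ioc (0:ℝ) T, F (ω, u) := funext hWioc
      rw [this]
      exact hWm.aestronglyMeasurable
    have hWnn : ∀ ω, 0 ≤ ∫ u in (0:ℝ)..T, Real.exp (r * u) * |Real.exp (σ * B' u ω) - 1| :=
      fun ω => intervalIntegral.integral_nonneg hT.le
        (fun u _ => mul_nonneg (Real.exp_pos _).le (abs_nonneg _))
    have hlb : ∫⁻ ω, ENNReal.ofReal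
        (∫ u in (0:ℝ)..T, Real.exp (r * u) * |Real.exp (σ * B' u ω) - 1|) ∂(ℙ : Measure Ω)
        ≤ ENNReal.ofReal (Real.exp (r * T) * (|σ| * C₁) * T) := by
      calc ∫⁻ ω, ENNReal.ofReal
            (∫ u in (0:ℝ)..T, Real.exp (r * u) * |Real.exp (σ * B' u ω) - 1|) ∂(ℙ : Measure Ω)
          = ∫⁻ ω, ∫⁻ u in Set.Ioc (0:ℝ) T, ENNReal.ofReal (F (ω, u)) ∂volume ∂(ℙ : Measure Ω) :=
            lintegral_congr (fun ω => hofReal ω)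
        _ = ∫⁻ u in Set.Ioc (0:ℝ) T, ∫⁻ ω, ENNReal.ofReal (F (ω, u)) ∂(ℙ : Measure Ω) ∂volume :=
            lintegral_lintegral_swap (hFm.measurable.ennreal_ofReal.aemeasurable)
        _ ≤ ∫⁻ _ in Set.Ioc (0:ℝ) T,
              ENNReal.ofReal (Real.exp (r * T) * (|σ| * C₁)) ∂volume := by
            apply setLIntegral_mono measurable_const
            intro u hu
            obtain ⟨hint_u, hbd_u⟩ := hmom σ hσ hσr u hu.1.le hu.2
            have h1 : ∫⁻ ω, ENNReal.ofReal (F (ω, u)) ∂(ℙ : Measure Ω)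
                = ENNReal.ofReal (Real.exp (r * u))
                  * ∫⁻ ω, ENNReal.ofReal (|Real.exp (σ * B' u ω) - 1|) ∂(ℙ : Measure Ω) := by
              rw [← lintegral_const_mul (f := fun ω => ENNReal.ofReal |Real.exp (σ * B' u ω) - 1|) _
                ((((((hB'meas u).const_mul σ).exp.sub measurable_const).abs).ennreal_ofReal :
                  Measurable fun ω => ENNReal.ofReal |Real.exp (σ * B' u ω) - 1|))]
              apply lintegral_congr
              intro ω
              rw [← ENNReal.ofReal_mul (Real.exp_pos _).le]
            have h2 : ∫⁻ ω, ENNReal.ofReal (|Real.exp (σ * B' u ω) - 1|) ∂(ℙ : Measure Ω)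
                = ENNReal.ofReal (∫ ω, |Real.exp (σ * B' u ω) - 1| ∂(ℙ : Measure Ω)) :=
              (ofReal_integral_eq_lintegral_ofReal hint_u
                (ae_of_all _ fun ω => abs_nonneg _)).symm
            rw [h1, h2]
            calc ENNReal.ofReal (Real.exp (r * u))
                  * ENNReal.ofReal (∫ ω, |Real.exp (σ * B' u ω) - 1| ∂(ℙ : Measure Ω))
                ≤ ENNReal.ofReal (Real.exp (r * T)) * ENNReal.ofReal (|σ| * C₁) :=
                  mul_le_mul'
                    (ENNReal.ofReal_le_ofReal (Real.exp_le_exp.mpr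
                      (mul_le_mul_of_nonneg_left hu.2 hr.le)))
                    (ENNReal.ofReal_le_ofReal hbd_u)
              _ = ENNReal.ofReal (Real.exp (r * T) * (|σ| * C₁)) :=
                  (ENNReal.ofReal_mul (Real.exp_pos _).le).symm
        _ = ENNReal.ofReal (Real.exp (r * T) * (|σ| * C₁)) * volume (Set.Ioc (0:ℝ) T) :=
            setLIntegral_const _ _
        _ = ENNReal.ofReal (Real.exp (r * T) * (|σ| * C₁)) * ENNReal.ofReal T := by
            rw [Real.volume_Ioc, sub_zero]
        _ = ENNReal.ofReal (Real.exp (r * T) * (|σ| * C₁) * T) :=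
            (ENNReal.ofReal_mul (by positivity)).symm
    have hWint : Integrable
        (fun ω => ∫ u in (0:ℝ)..T, Real.exp (r * u) * |Real.exp (σ * B' u ω) - 1|)
        (ℙ : Measure Ω) := by
      refine ⟨hWm', ?_⟩
      rw [hasFiniteIntegral_iff_ofReal (ae_of_all _ hWnn)]
      exact lt_of_le_of_lt hlb ENNReal.ofReal_lt_top
    refine ⟨hWint, ?_⟩
    rw [integral_eq_lintegral_of_nonneg_ae (ae_of_all _ hWnn) hWm']
    exact ENNReal.toReal_le_of_le_ofReal (by positivity) hlb
  -- the core estimate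
  have hcore : ∀ σ : ℝ, σ ≠ 0 → σ ^ 2 ≤ r / 2 → ∀ y ∈ K,
      ∃ G : Ω → ℝ, (∀ ω, 0 ≤ G ω) ∧ Integrable G (ℙ : Measure Ω) ∧
        (∫ ω, G ω ∂(ℙ : Measure Ω)) ≤ Cm * |σ| ∧
        ∀ᵐ ω ∂(ℙ : Measure Ω), ‖Φ σ T ω y - Ψ T y‖ ≤ G ω := by
    intro σ hσ hσr y hy
    have hynn : ∀ i, 0 ≤ y i := hKnn y hy
    have hC₀nn : 0 ≤ C₀ := le_trans (norm_nonneg _) (hC₀ y hy 0 le_rfl).1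
    obtain ⟨hWint, hWbd⟩ := hWfacts σ hσ hσr
    obtain ⟨hAint, hAbd⟩ := hmom σ hσ hσr T hT.le le_rfl
    have hc2nn : (0:ℝ) ≤ C₀ * (r + 1 + r * T) := by positivity
    have hc1nn : (0:ℝ) ≤ C₀ * Real.exp (r * T) := by positivity
    refine ⟨fun ω => C₀ * Real.exp (r * T) * |Real.exp (σ * B' T ω) - 1|
      + C₀ * (r + 1 + r * T)
        * (∫ u in (0:ℝ)..T, Real.exp (r * u) * |Real.exp (σ * B' u ω) - 1|),
      ?_, ?_, ?_, ?_⟩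
    · intro ω
      dsimp only
      have h1 : 0 ≤ ∫ u in (0:ℝ)..T, Real.exp (r * u) * |Real.exp (σ * B' u ω) - 1| :=
        intervalIntegral.integral_nonneg hT.le
          (fun u _ => mul_nonneg (Real.exp_pos _).le (abs_nonneg _))
      have h2 : 0 ≤ C₀ * Real.exp (r * T) * |Real.exp (σ * B' T ω) - 1| :=
        mul_nonneg hc1nn (abs_nonneg _)
      have h3 : 0 ≤ C₀ * (r + 1 + r * T)
          * (∫ u in (0:ℝ)..T, Real.exp (r * u) * |Real.exp (σ * B' u ω) - 1|) :=
        mul_nonneg hc2nn h1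
      linarith
    · exact (hAint.const_mul _).add (hWint.const_mul _)
    · rw [integral_add (hAint.const_mul _) (hWint.const_mul _),
        MeasureTheory.integral_const_mul, MeasureTheory.integral_const_mul]
      have e1 : C₀ * Real.exp (r * T) * (∫ ω, |Real.exp (σ * B' T ω) - 1| ∂(ℙ : Measure Ω))
          ≤ C₀ * Real.exp (r * T) * (|σ| * C₁) := mul_le_mul_of_nonneg_left hAbd hc1nn
      have e2 : C₀ * (r + 1 + r * T)
          * (∫ ω, (∫ u in (0:ℝ)..T,
              Real.exp (r * u) * |Real.exp (σ * B' u ω) - 1|) ∂(ℙ : Measure Ω))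
          ≤ C₀ * (r + 1 + r * T) * (Real.exp (r * T) * (|σ| * C₁) * T) :=
        mul_le_mul_of_nonneg_left hWbd hc2nn
      have e3 : C₀ * Real.exp (r * T) * (|σ| * C₁)
          + C₀ * (r + 1 + r * T) * (Real.exp (r * T) * (|σ| * C₁) * T) = Cm * |σ| := by
        rw [hCmdef]; ring
      linarith
    · -- pointwise bound on the good set
      filter_upwards [hSae] with ω hω
      have hbcont : Continuous fun t => B t ω := (hS ω hω).1
      obtain ⟨h1, h2, h3⟩ := LV_det r T σ hr hT (fun t => B t ω) hbcont
        (fun s => g σ s ω) (fun s => hg σ s ω)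
      have hreB : ∀ u : ℝ, B' u ω = B u ω := fun u => hB'S ω hω u
      set τ : ℝ := ∫ u in (0:ℝ)..T, g σ u ω with hτdef
      set Wv : ℝ := ∫ u in (0:ℝ)..T, Real.exp (r * u) * |Real.exp (σ * B u ω) - 1| with hWvdef
      -- identify the G-terms with the B-versions
      have hWeq : (∫ u in (0:ℝ)..T, Real.exp (r * u) * |Real.exp (σ * B' u ω) - 1|) = Wv := by
        rw [hWvdef]
        apply intervalIntegral.integral_congr
        intro u _
        simp only [hreB u]
      have hAeq : |Real.exp (σ * B' T ω) - 1| = |Real.exp (σ * B T ω) - 1| := by rw [hreB T]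
      -- estimates from the deterministic lemma
      have hΨτ : ‖Ψ τ y‖ ≤ C₀ := (hC₀ y hy τ h2).1
      have hLip : ‖Ψ τ y - Ψ T y‖ ≤ C₀ * |τ - T| := by
        have hbd : ∀ i, ‖Ψ τ y i - Ψ T y i‖ ≤ C₀ * ‖τ - T‖ := by
          intro i
          refine (convex_Ici (0:ℝ)).norm_image_sub_le_of_norm_hasDerivWithin_le
            (f := fun t => Ψ t y i)
            (f' := fun t => Ψ t y i * (r + ∑ j, a i j * Ψ t y j))
            (fun t ht => (hΨ' y hynn t ht i).hasDerivWithinAt) ?_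
            (Set.mem_Ici.mpr hT.le) (Set.mem_Ici.mpr h2)
          intro t ht
          calc ‖Ψ t y i * (r + ∑ j, a i j * Ψ t y j)‖
              ≤ ‖fun i => Ψ t y i * (r + ∑ j, a i j * Ψ t y j)‖ :=
                norm_le_pi_norm (fun i => Ψ t y i * (r + ∑ j, a i j * Ψ t y j)) i
            _ ≤ C₀ := (hC₀ y hy t ht).2
        rw [show C₀ * |τ - T| = C₀ * ‖τ - T‖ by rw [Real.norm_eq_abs]]
        refine (pi_norm_le_iff_of_nonneg
          (mul_nonneg hC₀nn (norm_nonneg _))).mpr ?_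
        intro i
        simpa using hbd i
      -- put the pieces together
      rw [hΦ σ T ω y, ← hτdef]
      have hdecomp : g σ T ω • Ψ τ y - Ψ T y
          = (g σ T ω - 1) • Ψ τ y + (Ψ τ y - Ψ T y) := by
        rw [sub_smul, one_smul]
        abel
      rw [hdecomp]
      have hnorm1 : ‖(g σ T ω - 1) • Ψ τ y‖ = |g σ T ω - 1| * ‖Ψ τ y‖ := by
        rw [norm_smul, Real.norm_eq_abs]
      have hg1 : |g σ T ω - 1| ≤ Real.exp (r * T) * |Real.exp (σ * B T ω) - 1| + r * Wv := h1
      have hτT : |τ - T| ≤ (1 + r * T) * Wv := h3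
      have hWvnn : 0 ≤ Wv :=
        intervalIntegral.integral_nonneg hT.le
          (fun u _ => mul_nonneg (Real.exp_pos _).le (abs_nonneg _))
      calc ‖(g σ T ω - 1) • Ψ τ y + (Ψ τ y - Ψ T y)‖
          ≤ ‖(g σ T ω - 1) • Ψ τ y‖ + ‖Ψ τ y - Ψ T y‖ := norm_add_le _ _
        _ = |g σ T ω - 1| * ‖Ψ τ y‖ + ‖Ψ τ y - Ψ T y‖ := by rw [hnorm1]
        _ ≤ (Real.exp (r * T) * |Real.exp (σ * B T ω) - 1| + r * Wv) * C₀
            + C₀ * ((1 + r * T) * Wv) := by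
            have i1 : |g σ T ω - 1| * ‖Ψ τ y‖
                ≤ (Real.exp (r * T) * |Real.exp (σ * B T ω) - 1| + r * Wv) * C₀ :=
              mul_le_mul hg1 hΨτ (norm_nonneg _)
                (by positivity)
            have i2 : ‖Ψ τ y - Ψ T y‖ ≤ C₀ * ((1 + r * T) * Wv) :=
              hLip.trans (mul_le_mul_of_nonneg_left hτT hC₀nn)
            linarith
        _ = C₀ * Real.exp (r * T) * |Real.exp (σ * B' T ω) - 1|
            + C₀ * (r + 1 + r * T)
              * (∫ u in (0:ℝ)..T, Real.exp (r * u) * |Real.exp (σ * B' u ω) - 1|) := by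
            rw [hWeq, hAeq]
            ring
  constructor
  · -- part 1
    refine ⟨Cm, ?_⟩
    intro σ hσ2 hσr y hy
    have hσ : σ ≠ 0 := by
      intro h
      rw [h] at hσ2
      simp at hσ2
    obtain ⟨G, hGnn, hGint, hGbd, hGae⟩ := hcore σ hσ hσr y hy
    calc ∫ ω, ‖Φ σ T ω y - Ψ T y‖ ∂(ℙ : Measure Ω) ≤ ∫ ω, G ω ∂(ℙ : Measure Ω) :=
        integral_mono_of_nonneg (ae_of_all _ fun ω => norm_nonneg _) hGint hGae
      _ ≤ Cm * |σ| := hGbd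
  · -- part 2
    intro δ hδ
    have hub : ∀ σ : ℝ, σ ≠ 0 → σ ^ 2 ≤ r / 2 →
        (⨆ y ∈ K, (ℙ : Measure Ω) {ω | δ ≤ ‖Φ σ T ω y - Ψ T y‖})
          ≤ ENNReal.ofReal (Cm * |σ| / δ) := by
      intro σ hσ hσr
      refine iSup₂_le fun y hy => ?_
      obtain ⟨G, hGnn, hGint, hGbd, hGae⟩ := hcore σ hσ hσr y hy
      have hsub : {ω | δ ≤ ‖Φ σ T ω y - Ψ T y‖}
          ⊆ {ω | δ ≤ G ω} ∪ {ω | ¬ (‖Φ σ T ω y - Ψ T y‖ ≤ G ω)} := by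
        intro ω hω
        by_cases hgω : ‖Φ σ T ω y - Ψ T y‖ ≤ G ω
        · exact Or.inl (le_trans hω hgω)
        · exact Or.inr hgω
      have hN : (ℙ : Measure Ω) {ω | ¬ (‖Φ σ T ω y - Ψ T y‖ ≤ G ω)} = 0 := ae_iff.mp hGae
      have hmono : (ℙ : Measure Ω) {ω | δ ≤ ‖Φ σ T ω y - Ψ T y‖}
          ≤ (ℙ : Measure Ω) {ω | δ ≤ G ω} :=
        (measure_mono hsub).trans ((measure_union_le _ _).trans (by rw [hN, add_zero]))
      have hmar := mul_meas_ge_le_integral_of_nonneg (ae_of_all _ hGnn) hGint δ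
      have h1 : ((ℙ : Measure Ω) {ω | δ ≤ G ω}).toReal ≤ Cm * |σ| / δ := by
        rw [le_div_iff₀ hδ]
        calc ((ℙ : Measure Ω) {ω | δ ≤ G ω}).toReal * δ
            = δ * ((ℙ : Measure Ω) {ω | δ ≤ G ω}).toReal := by ring
          _ ≤ ∫ ω, G ω ∂(ℙ : Measure Ω) := hmar
          _ ≤ Cm * |σ| := hGbd
      have h2 : (ℙ : Measure Ω) {ω | δ ≤ G ω} ≤ ENNReal.ofReal (Cm * |σ| / δ) := by
        rw [← ENNReal.ofReal_toReal (measure_ne_top (ℙ : Measure Ω) _)]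
        exact ENNReal.ofReal_le_ofReal h1
      exact hmono.trans h2
    have hev : ∀ᶠ σ in 𝓝[≠] (0:ℝ),
        (⨆ y ∈ K, (ℙ : Measure Ω) {ω | δ ≤ ‖Φ σ T ω y - Ψ T y‖})
          ≤ ENNReal.ofReal (Cm * |σ| / δ) := by
      have hsq : Tendsto (fun σ : ℝ => σ ^ 2) (𝓝 0) (𝓝 0) := by
        have := (continuous_pow 2 (M := ℝ)).tendsto (0:ℝ)
        simpa using this
      have h1 : ∀ᶠ σ in 𝓝 (0:ℝ), σ ^ 2 < r / 2 :=
        hsq.eventually_lt_const (by positivity)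
      filter_upwards [h1.filter_mono nhdsWithin_le_nhds, self_mem_nhdsWithin] with σ hσ1 hσ2
      exact hub σ hσ2 hσ1.le
    have hlim : Tendsto (fun σ : ℝ => ENNReal.ofReal (Cm * |σ| / δ)) (𝓝[≠] (0:ℝ)) (𝓝 0) := by
      have hreal : Tendsto (fun σ : ℝ => Cm * |σ| / δ) (𝓝 (0:ℝ)) (𝓝 0) := by
        have : Continuous fun σ : ℝ => Cm * |σ| / δ :=
          ((continuous_const.mul continuous_abs).div_const δ)
        have h0 := this.tendsto (0:ℝ)
        simpa using h0
      have := ENNReal.tendsto_ofReal (hreal.mono_left (nhdsWithin_le_nhds (s := {(0:ℝ)}ᶜ)))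
      simpa using this
    exact tendsto_of_tendsto_of_tendsto_of_le_of_le' tendsto_const_nhds hlim
      (Filter.Eventually.of_forall fun σ => zero_le) hev
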